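/- Let d ≥ 1, κ ≥ 1, ρ ∈ (0,1), and let F̃, G ∈ ℝ^{d×d} satisfy ‖F̃^j‖₂ ≤ κ² ρ^j for all j ≥ 0 and ‖G‖₂ ≤ κ. Define weights ξ_0 = ξ_1 = ξ_2 = 1 and ξ_j = ρ^{−(j−2)/2} for j ≥ 3, and for a sequence Y = (Y^{[r]})_{r≥1} of d×d matrices set ‖Y‖_𝒳² = Σ_{r≥1} ρ^{−r} ‖Y^{[r]}‖_F² (with a matrix P acting coordinatewise: PY = (P Y^{[r]})_r). Let s ≥ 2 be an integer, let Y_0 be a matrix sequence with ‖Y_0‖_𝒳 < ∞, and for k ≥ 1 let Y_k = F̃^{k−1} G X_k for matrix sequences X_k with ‖X_k‖_𝒳 < ∞. Then (ξ_s² ‖F̃^{s−1} G Y_0‖_𝒳² + Σ_{k=1}^{∞} ξ_{s+k}² ‖F̃^{s} Y_k‖_𝒳²)^{1/2} ≤ κ⁴ ρ^{s/2} · (Σ_{k=0}^{∞} ξ_k² ‖Y_k‖_𝒳²)^{1/2}. -/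

import Mathlib

/-- Spectral norm (ℓ²-operator norm) of a real square matrix. -/
noncomputable def spec12 {d : ℕ} (M : Matrix (Fin d) (Fin d) ℝ) : ℝ :=
  ‖Matrix.toEuclideanCLM (𝕜 := ℝ) M‖

/-- Frobenius norm of a real square matrix. -/
noncomputable def frob12 {d : ℕ} (M : Matrix (Fin d) (Fin d) ℝ) : ℝ :=
  Real.sqrt (∑ i, ∑ j, (M i j) ^ 2)

lemma frob12_nonneg {d : ℕ} (M : Matrix (Fin d) (Fin d) ℝ) : 0 ≤ frob12 M :=
  Real.sqrt_nonneg _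

lemma spec12_nonneg {d : ℕ} (M : Matrix (Fin d) (Fin d) ℝ) : 0 ≤ spec12 M :=
  norm_nonneg _

lemma frob12_sq {d : ℕ} (M : Matrix (Fin d) (Fin d) ℝ) :
    frob12 M ^ 2 = ∑ i, ∑ j, (M i j) ^ 2 := by
  apply Real.sq_sqrt
  positivity

lemma frob12_mul_le {d : ℕ} (M N : Matrix (Fin d) (Fin d) ℝ) :
    frob12 (M * N) ≤ spec12 M * frob12 N := by
  have key : frob12 (M * N) ^ 2 ≤ (spec12 M * frob12 N) ^ 2 := by
    have hcol : ∀ j, ∑ i, ((M * N) i j) ^ 2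
        ≤ spec12 M ^ 2 * ∑ i, (N i j) ^ 2 := by
      intro j
      set v : EuclideanSpace ℝ (Fin d) := (WithLp.equiv 2 _).symm (fun i => N i j) with hv
      have h1 : Matrix.toEuclideanCLM (𝕜 := ℝ) M v
          = (WithLp.equiv 2 _).symm (Matrix.toLin' M (fun i => N i j)) := by
        rw [hv]; rfl
      have hnv : ‖v‖ ^ 2 = ∑ i, (N i j) ^ 2 := by
        rw [EuclideanSpace.norm_eq, Real.sq_sqrt (by positivity)]
        congr 1; ext i; rw [Real.norm_eq_abs, sq_abs]; rfl
      have hMv : ‖Matrix.toEuclideanCLM (𝕜 := ℝ) M v‖ ^ 2 = ∑ i, ((M * N) i j) ^ 2 := by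
        rw [h1, EuclideanSpace.norm_eq, Real.sq_sqrt (by positivity)]
        congr 1; ext i
        rw [Real.norm_eq_abs, sq_abs]
        show (Matrix.toLin' M (fun i => N i j) i) ^ 2 = _
        simp [Matrix.toLin'_apply, Matrix.mulVec, Matrix.mul_apply, dotProduct]
      have hle : ‖Matrix.toEuclideanCLM (𝕜 := ℝ) M v‖ ≤ spec12 M * ‖v‖ :=
        (Matrix.toEuclideanCLM (𝕜 := ℝ) M).le_opNorm v
      calc ∑ i, ((M * N) i j) ^ 2 = ‖Matrix.toEuclideanCLM (𝕜 := ℝ) M v‖ ^ 2 := hMv.symm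
        _ ≤ (spec12 M * ‖v‖) ^ 2 := by
              apply pow_le_pow_left₀ (norm_nonneg _) hle
        _ = spec12 M ^ 2 * ‖v‖ ^ 2 := by ring
        _ = spec12 M ^ 2 * ∑ i, (N i j) ^ 2 := by rw [hnv]
    rw [frob12_sq, Finset.sum_comm]
    calc ∑ j, ∑ i, ((M * N) i j) ^ 2 ≤ ∑ j, spec12 M ^ 2 * ∑ i, (N i j) ^ 2 :=
          Finset.sum_le_sum fun j _ => hcol j
      _ = spec12 M ^ 2 * ∑ j, ∑ i, (N i j) ^ 2 := by rw [Finset.mul_sum]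
      _ = (spec12 M * frob12 N) ^ 2 := by
          rw [mul_pow, frob12_sq, Finset.sum_comm]
  have h2 := Real.sqrt_le_sqrt key
  rwa [Real.sqrt_sq (frob12_nonneg _), Real.sqrt_sq (mul_nonneg (spec12_nonneg M) (frob12_nonneg N))] at h2

/-- The squared ρ-weighted norm `‖Y‖_𝒳² = ∑_{r≥1} ρ^{−r} ‖Y^{[r]}‖_F²` on sequences of
matrices (indexed from `1`). -/
noncomputable def xNormSq12 {d : ℕ} (ρ : ℝ) (Y : ℕ → Matrix (Fin d) (Fin d) ℝ) : ℝ :=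
  ∑' r : ℕ, (ρ ^ (r + 1))⁻¹ * frob12 (Y (r + 1)) ^ 2

/-- The weights `ξ_0 = ξ_1 = ξ_2 = 1` and `ξ_j = ρ^{−(j−2)/2}` for `j ≥ 3`. -/
noncomputable def xiw12 (ρ : ℝ) (j : ℕ) : ℝ := (Real.sqrt ρ ^ (j - 2))⁻¹

lemma xNormSq12_nonneg {d : ℕ} {ρ : ℝ} (hρ : 0 < ρ) (Y : ℕ → Matrix (Fin d) (Fin d) ℝ) :
    0 ≤ xNormSq12 ρ Y :=
  tsum_nonneg fun r => by positivity

lemma xiw12_sq {ρ : ℝ} (hρ : 0 ≤ ρ) (j : ℕ) : xiw12 ρ j ^ 2 = (ρ ^ (j - 2))⁻¹ := by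
  have h : (Real.sqrt ρ ^ (j - 2)) ^ 2 = ρ ^ (j - 2) := by
    rw [← pow_mul, mul_comm, pow_mul, Real.sq_sqrt hρ]
  rw [xiw12, inv_pow, h]

lemma xmul {d : ℕ} {ρ : ℝ} (hρ : 0 < ρ) (P : Matrix (Fin d) (Fin d) ℝ)
    (Y : ℕ → Matrix (Fin d) (Fin d) ℝ)
    (hsum : Summable fun r : ℕ => (ρ ^ (r + 1))⁻¹ * frob12 (Y (r + 1)) ^ 2) :
    (Summable fun r : ℕ => (ρ ^ (r + 1))⁻¹ * frob12 (P * Y (r + 1)) ^ 2) ∧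
      xNormSq12 ρ (fun r => P * Y r) ≤ spec12 P ^ 2 * xNormSq12 ρ Y := by
  have hpt : ∀ r : ℕ, (ρ ^ (r + 1))⁻¹ * frob12 (P * Y (r + 1)) ^ 2
      ≤ spec12 P ^ 2 * ((ρ ^ (r + 1))⁻¹ * frob12 (Y (r + 1)) ^ 2) := by
    intro r
    have h1 : frob12 (P * Y (r + 1)) ^ 2 ≤ (spec12 P * frob12 (Y (r + 1))) ^ 2 :=
      pow_le_pow_left₀ (frob12_nonneg _) (frob12_mul_le _ _) 2
    have h2 : (0:ℝ) ≤ (ρ ^ (r + 1))⁻¹ := by positivity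
    calc (ρ ^ (r + 1))⁻¹ * frob12 (P * Y (r + 1)) ^ 2
        ≤ (ρ ^ (r + 1))⁻¹ * (spec12 P * frob12 (Y (r + 1))) ^ 2 := by
          exact mul_le_mul_of_nonneg_left h1 h2
      _ = spec12 P ^ 2 * ((ρ ^ (r + 1))⁻¹ * frob12 (Y (r + 1)) ^ 2) := by ring
  have hsum2 : Summable fun r : ℕ =>
      spec12 P ^ 2 * ((ρ ^ (r + 1))⁻¹ * frob12 (Y (r + 1)) ^ 2) := hsum.mul_left _
  have hs1 : Summable fun r : ℕ => (ρ ^ (r + 1))⁻¹ * frob12 (P * Y (r + 1)) ^ 2 :=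
    Summable.of_nonneg_of_le (fun r => by positivity) hpt hsum2
  refine ⟨hs1, ?_⟩
  calc xNormSq12 ρ (fun r => P * Y r)
      ≤ ∑' r : ℕ, spec12 P ^ 2 * ((ρ ^ (r + 1))⁻¹ * frob12 (Y (r + 1)) ^ 2) :=
        Summable.tsum_le_tsum hpt hs1 hsum2
    _ = spec12 P ^ 2 * xNormSq12 ρ Y := tsum_mul_left

/-- operator norm bound `‖Aˢ‖ ≤ κ⁴ ρ^{s/2}` for the online linear control
history operator.  If `‖F̃ʲ‖₂ ≤ κ²ρʲ` and `‖G‖₂ ≤ κ`, then for `s ≥ 2` and structured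
histories `Y_k = F̃^{k−1} G X_k` (`k ≥ 1`) of finite norm,
`(ξ_s² ‖F̃^{s−1} G Y_0‖_𝒳² + ∑_{k≥1} ξ_{s+k}² ‖F̃^s Y_k‖_𝒳²)^{1/2}
  ≤ κ⁴ ρ^{s/2} (∑_{k≥0} ξ_k² ‖Y_k‖_𝒳²)^{1/2}`. -/
theorem stmt_12
    (d : ℕ) (hd : 1 ≤ d) (κ ρ : ℝ) (hκ : 1 ≤ κ) (hρ : ρ ∈ Set.Ioo (0:ℝ) 1)
    (Ftil G : Matrix (Fin d) (Fin d) ℝ)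
    (hF : ∀ j : ℕ, spec12 (Ftil ^ j) ≤ κ ^ 2 * ρ ^ j)
    (hG : spec12 G ≤ κ)
    (s : ℕ) (hs : 2 ≤ s)
    (Y Xs : ℕ → ℕ → Matrix (Fin d) (Fin d) ℝ)
    (hstruct : ∀ (k r : ℕ), Y (k + 1) r = Ftil ^ k * (G * Xs (k + 1) r))
    (hfin : ∀ k : ℕ, Summable fun r : ℕ => (ρ ^ (r + 1))⁻¹ * frob12 (Y k (r + 1)) ^ 2)
    (htot : Summable fun k : ℕ => xiw12 ρ k ^ 2 * xNormSq12 ρ (Y k)) :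
    Real.sqrt
        (xiw12 ρ s ^ 2 * xNormSq12 ρ (fun r => Ftil ^ (s - 1) * (G * Y 0 r))
          + ∑' k : ℕ, xiw12 ρ (s + k + 1) ^ 2 * xNormSq12 ρ (fun r => Ftil ^ s * Y (k + 1) r))
      ≤ κ ^ 4 * Real.sqrt (ρ ^ s) * Real.sqrt (∑' k : ℕ, xiw12 ρ k ^ 2 * xNormSq12 ρ (Y k)) := by
  obtain ⟨hρ0, hρ1⟩ := hρ
  have hκ0 : (0:ℝ) < κ := lt_of_lt_of_le one_pos hκ
  set g : ℕ → ℝ := fun k => xiw12 ρ k ^ 2 * xNormSq12 ρ (Y k) with hg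
  have hgnn : ∀ k, 0 ≤ g k := fun k =>
    mul_nonneg (sq_nonneg _) (xNormSq12_nonneg hρ0 _)
  -- k = 0 term
  have h0 : xiw12 ρ s ^ 2 * xNormSq12 ρ (fun r => Ftil ^ (s - 1) * (G * Y 0 r))
      ≤ κ ^ 8 * ρ ^ s * g 0 := by
    obtain ⟨hsumG, hleG⟩ := xmul hρ0 G (Y 0) (hfin 0)
    obtain ⟨_, hleF⟩ := xmul hρ0 (Ftil ^ (s - 1)) (fun r => G * Y 0 r) hsumG
    have hchain : xNormSq12 ρ (fun r => Ftil ^ (s - 1) * (G * Y 0 r))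
        ≤ spec12 (Ftil ^ (s - 1)) ^ 2 * (spec12 G ^ 2 * xNormSq12 ρ (Y 0)) :=
      hleF.trans (mul_le_mul_of_nonneg_left hleG (sq_nonneg _))
    have hFb : spec12 (Ftil ^ (s - 1)) ^ 2 ≤ (κ ^ 2 * ρ ^ (s - 1)) ^ 2 :=
      pow_le_pow_left₀ (spec12_nonneg _) (hF (s - 1)) 2
    have hGb : spec12 G ^ 2 ≤ κ ^ 2 := by
      have := pow_le_pow_left₀ (spec12_nonneg G) hG 2
      simpa [pow_mul] using this
    have hX0 : 0 ≤ xNormSq12 ρ (Y 0) := xNormSq12_nonneg hρ0 _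
    have hcoef : xiw12 ρ s ^ 2 * ((κ ^ 2 * ρ ^ (s - 1)) ^ 2 * (κ ^ 2 * xNormSq12 ρ (Y 0)))
        ≤ κ ^ 8 * ρ ^ s * g 0 := by
      rw [xiw12_sq hρ0.le, hg]
      have h00 : xiw12 ρ 0 ^ 2 = 1 := by simp [xiw12]
      simp only [h00, one_mul]
      have key : (ρ ^ (s - 2))⁻¹ * ((κ ^ 2 * ρ ^ (s - 1)) ^ 2 * κ ^ 2)
          ≤ κ ^ 8 * ρ ^ s := by
        have hpow : ρ ^ (s - 1) * ρ ^ (s - 1) = ρ ^ (s - 2) * ρ ^ s := by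
          rw [← pow_add, ← pow_add]; congr 1; omega
        have heq : (ρ ^ (s - 2))⁻¹ * ((κ ^ 2 * ρ ^ (s - 1)) ^ 2 * κ ^ 2)
            = κ ^ 6 * ρ ^ s := by
          field_simp
          linear_combination hpow
        rw [heq]
        have h68 : κ ^ 6 ≤ κ ^ 8 := pow_le_pow_right₀ hκ (by norm_num)
        exact mul_le_mul_of_nonneg_right h68 (by positivity)
      calc (ρ ^ (s - 2))⁻¹ * ((κ ^ 2 * ρ ^ (s - 1)) ^ 2 * (κ ^ 2 * xNormSq12 ρ (Y 0)))
          = ((ρ ^ (s - 2))⁻¹ * ((κ ^ 2 * ρ ^ (s - 1)) ^ 2 * κ ^ 2)) * xNormSq12 ρ (Y 0) := by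
            ring
        _ ≤ (κ ^ 8 * ρ ^ s) * xNormSq12 ρ (Y 0) := mul_le_mul_of_nonneg_right key hX0
    refine le_trans ?_ hcoef
    have h2 : spec12 (Ftil ^ (s - 1)) ^ 2 * (spec12 G ^ 2 * xNormSq12 ρ (Y 0))
        ≤ (κ ^ 2 * ρ ^ (s - 1)) ^ 2 * (κ ^ 2 * xNormSq12 ρ (Y 0)) :=
      mul_le_mul hFb (mul_le_mul_of_nonneg_right hGb hX0)
        (mul_nonneg (sq_nonneg _) hX0) (by positivity)
    exact mul_le_mul_of_nonneg_left (hchain.trans h2) (sq_nonneg _)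
  -- k ≥ 1 terms
  have h1 : ∀ k : ℕ, xiw12 ρ (s + k + 1) ^ 2 * xNormSq12 ρ (fun r => Ftil ^ s * Y (k + 1) r)
      ≤ κ ^ 8 * ρ ^ s * g (k + 1) := by
    intro k
    obtain ⟨_, hleF⟩ := xmul hρ0 (Ftil ^ s) (Y (k + 1)) (hfin (k + 1))
    have hFb : spec12 (Ftil ^ s) ^ 2 ≤ (κ ^ 2 * ρ ^ s) ^ 2 :=
      pow_le_pow_left₀ (spec12_nonneg _) (hF s) 2
    have hX : 0 ≤ xNormSq12 ρ (Y (k + 1)) := xNormSq12_nonneg hρ0 _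
    have hchain : xNormSq12 ρ (fun r => Ftil ^ s * Y (k + 1) r)
        ≤ (κ ^ 2 * ρ ^ s) ^ 2 * xNormSq12 ρ (Y (k + 1)) :=
      hleF.trans (mul_le_mul_of_nonneg_right hFb hX)
    have hcoef : xiw12 ρ (s + k + 1) ^ 2 * (κ ^ 2 * ρ ^ s) ^ 2
        ≤ κ ^ 8 * ρ ^ s * xiw12 ρ (k + 1) ^ 2 := by
      rw [xiw12_sq hρ0.le, xiw12_sq hρ0.le]
      have he1 : s + k + 1 - 2 = s + k - 1 := by omega
      have he2 : k + 1 - 2 = k - 1 := by omega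
      rw [he1, he2]
      have hpow : ρ ^ s * ρ ^ s * ρ ^ (k - 1) ≤ ρ ^ s * ρ ^ (s + k - 1) := by
        rw [← pow_add, ← pow_add, ← pow_add]
        exact pow_le_pow_of_le_one hρ0.le hρ1.le (by omega)
      have hdiv : (κ ^ 2 * ρ ^ s) ^ 2 / ρ ^ (s + k - 1) ≤ κ ^ 4 * ρ ^ s / ρ ^ (k - 1) := by
        rw [div_le_div_iff₀ (by positivity) (by positivity)]
        calc (κ ^ 2 * ρ ^ s) ^ 2 * ρ ^ (k - 1)
            = κ ^ 4 * (ρ ^ s * ρ ^ s * ρ ^ (k - 1)) := by ring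
          _ ≤ κ ^ 4 * (ρ ^ s * ρ ^ (s + k - 1)) :=
              mul_le_mul_of_nonneg_left hpow (by positivity)
          _ = κ ^ 4 * ρ ^ s * ρ ^ (s + k - 1) := by ring
      have h48 : κ ^ 4 ≤ κ ^ 8 := pow_le_pow_right₀ hκ (by norm_num)
      have hx : (0:ℝ) ≤ ρ ^ s * (ρ ^ (k - 1))⁻¹ := by positivity
      calc (ρ ^ (s + k - 1))⁻¹ * (κ ^ 2 * ρ ^ s) ^ 2
          = (κ ^ 2 * ρ ^ s) ^ 2 / ρ ^ (s + k - 1) := by ring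
        _ ≤ κ ^ 4 * ρ ^ s / ρ ^ (k - 1) := hdiv
        _ = κ ^ 4 * (ρ ^ s * (ρ ^ (k - 1))⁻¹) := by ring
        _ ≤ κ ^ 8 * (ρ ^ s * (ρ ^ (k - 1))⁻¹) := mul_le_mul_of_nonneg_right h48 hx
        _ = κ ^ 8 * ρ ^ s * (ρ ^ (k - 1))⁻¹ := by ring
    calc xiw12 ρ (s + k + 1) ^ 2 * xNormSq12 ρ (fun r => Ftil ^ s * Y (k + 1) r)
        ≤ xiw12 ρ (s + k + 1) ^ 2 * ((κ ^ 2 * ρ ^ s) ^ 2 * xNormSq12 ρ (Y (k + 1))) :=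
          mul_le_mul_of_nonneg_left hchain (sq_nonneg _)
      _ = (xiw12 ρ (s + k + 1) ^ 2 * (κ ^ 2 * ρ ^ s) ^ 2) * xNormSq12 ρ (Y (k + 1)) := by ring
      _ ≤ (κ ^ 8 * ρ ^ s * xiw12 ρ (k + 1) ^ 2) * xNormSq12 ρ (Y (k + 1)) :=
          mul_le_mul_of_nonneg_right hcoef hX
      _ = κ ^ 8 * ρ ^ s * g (k + 1) := by rw [hg]; ring
  -- combine
  have hgs : Summable fun k => g (k + 1) := (summable_nat_add_iff 1).mpr htot
  have hrs : Summable fun k => κ ^ 8 * ρ ^ s * g (k + 1) := hgs.mul_left _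
  have hBnn : ∀ k : ℕ, 0 ≤ xiw12 ρ (s + k + 1) ^ 2
      * xNormSq12 ρ (fun r => Ftil ^ s * Y (k + 1) r) :=
    fun k => mul_nonneg (sq_nonneg _) (xNormSq12_nonneg hρ0 _)
  have hBsum : Summable fun k : ℕ => xiw12 ρ (s + k + 1) ^ 2
      * xNormSq12 ρ (fun r => Ftil ^ s * Y (k + 1) r) :=
    Summable.of_nonneg_of_le hBnn h1 hrs
  have hsumle : ∑' k : ℕ, xiw12 ρ (s + k + 1) ^ 2
      * xNormSq12 ρ (fun r => Ftil ^ s * Y (k + 1) r)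
      ≤ κ ^ 8 * ρ ^ s * ∑' k, g (k + 1) := by
    calc _ ≤ ∑' k : ℕ, κ ^ 8 * ρ ^ s * g (k + 1) := Summable.tsum_le_tsum h1 hBsum hrs
      _ = κ ^ 8 * ρ ^ s * ∑' k, g (k + 1) := tsum_mul_left
  have hTsplit : ∑' k, g k = g 0 + ∑' k, g (k + 1) := Summable.tsum_eq_zero_add htot
  have hinside : xiw12 ρ s ^ 2 * xNormSq12 ρ (fun r => Ftil ^ (s - 1) * (G * Y 0 r))
      + ∑' k : ℕ, xiw12 ρ (s + k + 1) ^ 2 * xNormSq12 ρ (fun r => Ftil ^ s * Y (k + 1) r)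
      ≤ κ ^ 8 * ρ ^ s * ∑' k, g k := by
    rw [hTsplit, mul_add]
    exact add_le_add h0 hsumle
  have hT : 0 ≤ ∑' k, g k := tsum_nonneg hgnn
  calc Real.sqrt _ ≤ Real.sqrt (κ ^ 8 * ρ ^ s * ∑' k, g k) := Real.sqrt_le_sqrt hinside
    _ = κ ^ 4 * Real.sqrt (ρ ^ s) * Real.sqrt (∑' k, g k) := by
        rw [Real.sqrt_mul (by positivity), Real.sqrt_mul (by positivity)]
        congr 1
        rw [show κ ^ 8 = (κ ^ 4) ^ 2 by ring, Real.sqrt_sq (by positivity)]
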